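/- Let h ≥ 2 and let s, t be nonnegative integers with gcd(h, s−t) = 1. Let A = {s} ∪ {hz + t : z ∈ ℕ}. If n ∈ ℕ satisfies n ≡ t − s (mod h) and n ≥ (h−1)s + t, then there exists a unique z₁ ∈ ℕ with n = (h−1)s + (hz₁ + t), and this is the unique representation of n as a sum of h elements of A. -/

import Mathlib

def sumsetN (h : ℕ) (A : Set ℕ) : Set ℕ :=
  {n | ∃ f : Fin h → ℕ, (∀ i, f i ∈ A) ∧ n = ∑ i, f i}

def InfiniteGapsN (Y : Set ℕ) : Prop :=
  ∀ C : ℤ, 0 < C →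
    {p : ℕ × ℕ | p.1 ∈ Y ∧ p.2 ∈ Y ∧ p.1 ≠ p.2 ∧ |(p.1 : ℤ) - p.2| ≤ C}.Finite

lemma aux_sum15 (h t : ℕ) : ∀ (m : Multiset ℕ), (∀ a ∈ m, ∃ z, a = h * z + t) →
    ∃ Z, m.sum = h * Z + Multiset.card m * t := by
  intro m
  induction m using Multiset.induction with
  | empty => intro _; exact ⟨0, by simp⟩
  | cons a m ih =>
    intro hm
    obtain ⟨Z, hZ⟩ := ih (fun b hb => hm b (Multiset.mem_cons_of_mem hb))
    obtain ⟨z, hz⟩ := hm a (Multiset.mem_cons_self a m)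
    refine ⟨z + Z, ?_⟩
    simp only [Multiset.sum_cons, Multiset.card_cons, hz, hZ]
    ring

theorem stmt15 (h : ℕ) (hh : 2 ≤ h) (s t : ℕ)
    (hgcd : Int.gcd (h : ℤ) ((s : ℤ) - t) = 1)
    (A : Set ℕ) (hA : A = {s} ∪ {m : ℕ | ∃ z : ℕ, m = h * z + t})
    (n : ℕ) (hn : (n : ℤ) ≡ (t : ℤ) - s [ZMOD (h : ℤ)]) (hn2 : (h - 1) * s + t ≤ n) :
    ∃! z₁ : ℕ, n = (h - 1) * s + (h * z₁ + t) ∧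
      ∀ m : Multiset ℕ, Multiset.card m = h → (∀ a ∈ m, a ∈ A) → m.sum = n →
        m = Multiset.replicate (h - 1) s + {h * z₁ + t} := by
  classical
  have hh0 : 0 < h := by omega
  have hh1 : 1 ≤ h := by omega
  -- s is not of the form h*z + t
  have hs_not : ∀ z : ℕ, s ≠ h * z + t := by
    intro z hz
    have hdvd : (h : ℤ) ∣ (s : ℤ) - t := ⟨z, by rw [hz]; push_cast; ring⟩
    have h1 : (h : ℤ) ∣ (Int.gcd (h : ℤ) ((s : ℤ) - t) : ℤ) := Int.dvd_coe_gcd dvd_rfl hdvd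
    rw [hgcd] at h1
    have h2 : (h : ℤ) = 1 := Int.eq_one_of_dvd_one (by positivity) h1
    have : h = 1 := by exact_mod_cast h2
    omega
  -- obtain z₁
  obtain ⟨c, hc⟩ := Int.ModEq.dvd hn
  -- hc : (t - s) - n = h * c
  have key : (n : ℤ) = ((h : ℤ) - 1) * s + ((h : ℤ) * (-c - s) + t) := by
    have hn' : (n : ℤ) = (t : ℤ) - s - (h : ℤ) * c := by linarith
    rw [hn']; ring
  have hn2' : (((h : ℤ)) - 1) * s + t ≤ (n : ℤ) := by
    have := hn2
    zify [hh1] at this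
    linarith
  have hd0 : 0 ≤ -c - s := by
    nlinarith [key, hn2', (by exact_mod_cast hh1 : (1:ℤ) ≤ (h:ℤ))]
  set z₁ : ℕ := (-c - s).toNat with hz₁def
  have hz₁cast : (z₁ : ℤ) = -c - s := Int.toNat_of_nonneg hd0
  have hEqZ : (n : ℤ) = ((h : ℤ) - 1) * s + ((h : ℤ) * z₁ + t) := by
    rw [hz₁cast]; exact key
  have hEq : n = (h - 1) * s + (h * z₁ + t) := by
    have : ((n : ℤ)) = (((h - 1) * s + (h * z₁ + t) : ℕ) : ℤ) := by
      push_cast [Nat.cast_sub hh1]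
      linarith [hEqZ]
    exact_mod_cast this
  refine ⟨z₁, ⟨hEq, ?_⟩, ?_⟩
  · -- uniqueness of representation
    intro m hcard hmem hsum
    set m₂ := m.filter (fun a => ¬ a = s) with hm₂def
    set k := m.count s with hkdef
    have hsplit : m = Multiset.replicate k s + m₂ := by
      conv_lhs => rw [← Multiset.filter_add_not (fun a => a = s) m]
      congr 1
      rw [hkdef]
      exact Multiset.filter_eq' m s
    have hcard2 : k + Multiset.card m₂ = h := by
      have := congrArg Multiset.card hsplit
      simp [Multiset.card_replicate] at this
      omega
    have hm2mem : ∀ a ∈ m₂, ∃ z, a = h * z + t := by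
      intro a ha
      have hab := Multiset.mem_filter.mp ha
      have h1 : ¬ a = s := hab.2
      have h2 : a ∈ m := hab.1
      have h3 := hmem a h2
      rw [hA] at h3
      rcases h3 with h' | h'
      · exact absurd (Set.mem_singleton_iff.mp h') h1
      · exact h'
    obtain ⟨Z, hZ⟩ := aux_sum15 h t m₂ hm2mem
    have hsum2 : n = k * s + (h * Z + Multiset.card m₂ * t) := by
      rw [← hsum, hsplit, Multiset.sum_add, Multiset.sum_replicate, hZ, smul_eq_mul]
    -- congruence gives h ∣ k + 1
    have hdvd2 : (h : ℤ) ∣ ((k : ℤ) + 1) * ((t : ℤ) - s) := by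
      refine ⟨c + Z + t, ?_⟩
      have hc2 : (Multiset.card m₂ : ℤ) = (h : ℤ) - k := by
        have := hcard2; push_cast [← this]; ring
      have hsumZ : (n : ℤ) = (k : ℤ) * s + ((h : ℤ) * Z + (Multiset.card m₂ : ℤ) * t) := by
        exact_mod_cast congrArg (Nat.cast : ℕ → ℤ) hsum2
      linear_combination hc + hsumZ + (t : ℤ) * hc2
    have hcop : IsCoprime ((h : ℤ)) ((t : ℤ) - s) := by
      rw [Int.isCoprime_iff_gcd_eq_one]
      rw [show (t : ℤ) - s = -((s : ℤ) - t) by ring, Int.gcd_neg]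
      exact hgcd
    have hdvd3 : (h : ℤ) ∣ ((k : ℤ) + 1) := hcop.dvd_of_dvd_mul_right hdvd2
    have hdvd4 : h ∣ k + 1 := by exact_mod_cast hdvd3
    have hkle : k ≤ h := by omega
    have hk : k = h - 1 := by
      obtain ⟨q, hq⟩ := hdvd4
      rcases Nat.lt_or_ge q 2 with h' | h'
      · interval_cases q <;> omega
      · exfalso
        have h2 : h * 2 ≤ k + 1 := hq ▸ Nat.mul_le_mul_left h h'
        omega
    have hcardm2 : Multiset.card m₂ = 1 := by omega
    obtain ⟨a, ha⟩ := Multiset.card_eq_one.mp hcardm2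
    obtain ⟨z, hz⟩ := hm2mem a (ha ▸ Multiset.mem_singleton_self a)
    have hsum3 : n = (h - 1) * s + (h * z + t) := by
      rw [← hsum, hsplit, Multiset.sum_add, Multiset.sum_replicate, smul_eq_mul, ha,
        Multiset.sum_singleton, hk, hz]
    have hzz : z = z₁ := by
      have h1 : (h - 1) * s + (h * z + t) = (h - 1) * s + (h * z₁ + t) :=
        hsum3.symm.trans hEq
      have h2 : h * z + t = h * z₁ + t := Nat.add_left_cancel h1
      have h3 : h * z = h * z₁ := Nat.add_right_cancel h2
      exact Nat.eq_of_mul_eq_mul_left hh0 h3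
    rw [hsplit, hk, ha, hz, hzz]
  · -- uniqueness of z₁
    intro y hy
    have h1 : (h - 1) * s + (h * y + t) = (h - 1) * s + (h * z₁ + t) :=
      hy.1.symm.trans hEq
    have h2 : h * y + t = h * z₁ + t := Nat.add_left_cancel h1
    have h3 : h * y = h * z₁ := Nat.add_right_cancel h2
    exact Nat.eq_of_mul_eq_mul_left hh0 h3
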